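/- arXiv:2402.07420 — 2 statements merged into one kernel-verified Lean document; each statement's English description precedes it below -/
import Mathlib

section
/- Existence of a Satisfying Path Planner: If every edge of the domain D is undirected (i.e., (i,j) ∈ E implies (j,i) ∈ E), then for any k, ℓ, and m, there exists a path planner A that satisfies (k, ℓ, m)-Anonymity, i.e., A returns a (k, ℓ, m)-Anonymized Path for every (k, ℓ, m)-Anonymizable Tuple in D. -/
open scoped ENNReal

structure Domain (N : Type*) where
  E : N → N → Prop
  T : Set N
  c : N → N → ℝ
  c_nonneg : ∀ a b, 0 ≤ c a b
  v : N → Set N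

variable {N : Type*}

/-- A path is a nonempty sequence of nodes where consecutive nodes are joined by edges. -/
def IsPath (D : Domain N) (π : List N) : Prop :=
  π ≠ [] ∧ π.Chain' D.E

def startsAt (π : List N) (a : N) : Prop := π.head? = some a

def endsAt (π : List N) (b : N) : Prop := π.getLast? = some b

/-- A path covers a node `n` if some node on the path sees `n`. -/
def Covers (D : Domain N) (π : List N) (n : N) : Prop :=
  ∃ x ∈ π, n ∈ D.v x

/-- The cost of a path: the sum of the costs of its consecutive edges. -/
def cost (D : Domain N) : List N → ℝ
  | [] => 0
  | [_] => 0
  | a :: b :: rest => D.c a b + cost D (b :: rest)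

/-- Shortest-path distance (`∞` if there is no path). -/
noncomputable def spDist (D : Domain N) (a b : N) : ℝ≥0∞ :=
  ⨅ (π : List N) (_ : IsPath D π ∧ startsAt π a ∧ endsAt π b),
    ENNReal.ofReal (cost D π)

/-- A path planner maps (domain, start, goal, transit point) to a path or Failure (`none`). -/
abbrev Planner (N : Type*) := Domain N → N → N → N → Option (List N)

/-- A feasible solution to a PPVT: a path from `s` to `g` covering `t`. -/
def Feasible (D : Domain N) (s g t : N) (π : List N) : Prop :=
  IsPath D π ∧ startsAt π s ∧ endsAt π g ∧ Covers D π t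

/-- A planner is sound if any returned path is a feasible PPVT solution. -/
def SoundPlanner (D : Domain N) (A : Planner N) : Prop :=
  ∀ s g t π, A D s g t = some π → Feasible D s g t π

/-- The prefix `π|_m` consisting of the first `m` nodes (the whole path if `m = ∞`
or `m` exceeds the length). -/
def takeE (m : ℕ∞) (π : List N) : List N :=
  if m = ⊤ then π else π.take m.toNat

/-- `A (D, s, g, t)` is a `(k, ℓ, m)`-Anonymized Path: there is a set `S` of at least `k`
transit candidates, pairwise shortest-path distance `≥ ℓ`, whose planner outputs all agree
with the output for `t` on the first `m` nodes. -/
def IsAnonymized (D : Domain N) (A : Planner N) (s g t : N)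
    (k : ℕ) (ℓ : ℝ) (m : ℕ∞) : Prop :=
  ∃ (π : List N) (S : Finset N), A D s g t = some π ∧ ↑S ⊆ D.T ∧
    k ≤ S.card ∧
    (∀ i ∈ S, ∀ j ∈ S, i ≠ j → ENNReal.ofReal ℓ ≤ spDist D i j) ∧
    (∀ t' ∈ S, ∃ π', A D s g t' = some π' ∧ takeE m π' = takeE m π)

/-- `(D, s, g, t)` is a `(k, ℓ, m)`-Anonymizable Tuple: some sound planner outputs a
`(k, ℓ, m)`-Anonymized Path for it. -/
def IsAnonymizableTuple (D : Domain N) (s g t : N) (k : ℕ) (ℓ : ℝ) (m : ℕ∞) : Prop :=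
  t ∈ D.T ∧ s ≠ t ∧ g ≠ t ∧
    ∃ A : Planner N, SoundPlanner D A ∧ IsAnonymized D A s g t k ℓ m

/-- A planner satisfies `(k, ℓ, m)`-Anonymity for `D` if it returns a `(k, ℓ, m)`-Anonymized
Path for every `(k, ℓ, m)`-Anonymizable Tuple in `D`. -/
def SatisfiesAnonymity (D : Domain N) (A : Planner N) (k : ℕ) (ℓ : ℝ) (m : ℕ∞) : Prop :=
  ∀ s g t, IsAnonymizableTuple D s g t k ℓ m → IsAnonymized D A s g t k ℓ m

def Undirected (D : Domain N) : Prop := ∀ i j, D.E i j → D.E j i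

/-- Concatenation of two paths sharing an endpoint (the shared node appears once). -/
def concatP (πa πb : List N) : List N := πa ++ πb.tail


section AuxStmt2
variable {N : Type*}

lemma mem_of_getLast?_eq' {l : List N} {a : N} (h : l.getLast? = some a) : a ∈ l := by
  obtain ⟨hne, hx⟩ := List.mem_getLast?_eq_getLast (l := l) (x := a) h
  subst hx
  exact List.getLast_mem hne

lemma concatP_good (D : Domain N) {P Q : List N} {q : N}
    (hP : IsPath D P) (hQ : IsPath D Q)
    (hPl : P.getLast? = some q) (hQh : Q.head? = some q) :
    IsPath D (concatP P Q) ∧ (concatP P Q).head? = P.head? ∧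
      (concatP P Q).getLast? = Q.getLast? ∧
      (∀ x ∈ P, x ∈ concatP P Q) ∧ (∀ x ∈ Q, x ∈ concatP P Q) := by
  obtain ⟨hPne, hPch⟩ := hP
  obtain ⟨hQne, hQch⟩ := hQ
  cases Q with
  | nil => exact absurd rfl hQne
  | cons b Q' =>
    have hb : b = q := by simpa using hQh
    subst hb
    have htail : concatP P (b :: Q') = P ++ Q' := rfl
    have hlink : ∀ y ∈ Q'.head?, D.E b y := (List.isChain_cons.mp hQch).1
    have hQ'ch : Q'.Chain' D.E := (List.isChain_cons.mp hQch).2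
    refine ⟨⟨?_, ?_⟩, ?_, ?_, ?_, ?_⟩
    · rw [htail]
      intro h
      exact hPne (List.append_eq_nil_iff.mp h).1
    · rw [htail]
      refine hPch.append hQ'ch ?_
      intro x hx y hy
      have : x = b := by rw [hPl] at hx; exact (Option.some_inj.mp hx.symm)
      subst this
      exact hlink y hy
    · rw [htail]
      cases P with
      | nil => exact absurd rfl hPne
      | cons a P' => simp
    · rw [htail]
      cases Q' with
      | nil =>
        simp only [List.append_nil]
        rw [hPl]
        rfl
      | cons c Q'' =>
        rw [List.getLast?_append_cons, List.getLast?_cons_cons]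
    · intro x hx
      rw [htail]
      exact List.mem_append_left _ hx
    · intro x hx
      rw [htail]
      rcases List.mem_cons.mp hx with rfl | hx
      · exact List.mem_append_left _ (mem_of_getLast?_eq' hPl)
      · exact List.mem_append_right _ hx

lemma reverse_isPath (D : Domain N) (hund : Undirected D) {P : List N} (hP : IsPath D P) :
    IsPath D P.reverse :=
  ⟨by simpa using hP.1, List.isChain_reverse.mpr (hP.2.imp fun {a b} h => hund a b h)⟩

lemma glue (D : Domain N) (hund : Undirected D) {s g : N} {P π : List N}
    (hP : IsPath D P) (hPs : startsAt P s) (hPe : endsAt P g)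
    (hπ : IsPath D π) (hπs : startsAt π s) (hπe : endsAt π g) :
    ∃ Q, IsPath D Q ∧ startsAt Q s ∧ endsAt Q g ∧
      (∀ x ∈ P, x ∈ Q) ∧ (∀ x ∈ π, x ∈ Q) := by
  have hrev := reverse_isPath D hund hπ
  have hrh : π.reverse.head? = some g := by rw [List.head?_reverse]; exact hπe
  have hrl : π.reverse.getLast? = some s := by rw [List.getLast?_reverse]; exact hπs
  obtain ⟨h1, h1h, h1l, h1mP, _⟩ := concatP_good D hP hrev hPe hrh
  obtain ⟨h2, h2h, h2l, h2m1, h2mπ⟩ :=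
    concatP_good D h1 hπ (by rw [h1l]; exact hrl) hπs
  refine ⟨_, h2, ?_, ?_, ?_, ?_⟩
  · show _ = some s
    rw [h2h, h1h]
    exact hPs
  · show _ = some g
    rw [h2l]
    exact hπe
  · intro x hx
    exact h2m1 _ (h1mP _ hx)
  · intro x hx
    exact h2mπ _ hx

lemma cover_all (D : Domain N) (hund : Undirected D) {s g : N}
    (P0 : List N) (h0 : IsPath D P0 ∧ startsAt P0 s ∧ endsAt P0 g) :
    ∀ ts : List N, (∀ t ∈ ts, ∃ π, Feasible D s g t π) →
      ∃ P, IsPath D P ∧ startsAt P s ∧ endsAt P g ∧ ∀ t ∈ ts, Covers D P t := by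
  intro ts
  induction ts with
  | nil => exact fun _ => ⟨P0, h0.1, h0.2.1, h0.2.2, by simp⟩
  | cons t ts ih =>
    intro h
    obtain ⟨P, hP, hPs, hPe, hcov⟩ := ih (fun t' ht' => h t' (List.mem_cons_of_mem _ ht'))
    obtain ⟨π, hπP, hπs, hπe, hπc⟩ := h t List.mem_cons_self
    obtain ⟨Q, hQ, hQs, hQe, hmP, hmπ⟩ := glue D hund hP hPs hPe hπP hπs hπe
    refine ⟨Q, hQ, hQs, hQe, ?_⟩
    intro t' ht'
    rcases List.mem_cons.mp ht' with rfl | ht'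
    · obtain ⟨x, hx, hv⟩ := hπc
      exact ⟨x, hmπ x hx, hv⟩
    · obtain ⟨x, hx, hv⟩ := hcov t' ht'
      exact ⟨x, hmP x hx, hv⟩

/-- A "universal" path from `s` to `g` covering every transit node for which a feasible
solution exists at all. -/
def GoodPath (D : Domain N) (s g : N) (P : List N) : Prop :=
  IsPath D P ∧ startsAt P s ∧ endsAt P g ∧
    ∀ t, (∃ π, Feasible D s g t π) → Covers D P t

open Classical in
noncomputable def bigP (D : Domain N) (s g : N) : List N :=
  if h : ∃ P, GoodPath D s g P then h.choose else []

lemma bigP_good (D : Domain N) {s g : N} (h : ∃ P, GoodPath D s g P) :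
    GoodPath D s g (bigP D s g) := by
  classical
  rw [bigP, dif_pos h]
  exact h.choose_spec

lemma exists_good [Fintype N] (D : Domain N) (hund : Undirected D) {s g t0 : N}
    (h : ∃ π, Feasible D s g t0 π) : ∃ P, GoodPath D s g P := by
  classical
  obtain ⟨π0, hπ0⟩ := h
  obtain ⟨P, h1, h2, h3, h4⟩ := cover_all D hund π0 ⟨hπ0.1, hπ0.2.1, hπ0.2.2.1⟩
    ((Finset.univ.filter fun t => ∃ π, Feasible D s g t π).toList)
    (fun t ht => (Finset.mem_filter.mp (Finset.mem_toList.mp ht)).2)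
  refine ⟨P, h1, h2, h3, fun t ht => h4 t ?_⟩
  exact Finset.mem_toList.mpr (Finset.mem_filter.mpr ⟨Finset.mem_univ _, ht⟩)

open Classical in
noncomputable def thePlanner (N : Type*) : Planner N := fun D s g t =>
  if ∃ π, Feasible D s g t π then some (bigP D s g) else none

end AuxStmt2

/-- Existence of a Satisfying Path Planner: if every edge of `D` is
undirected then for any `k`, `ℓ`, `m` there is a (sound) path planner satisfying
`(k, ℓ, m)`-Anonymity. -/
theorem stmt2 [Fintype N] (D : Domain N) (hund : Undirected D)
    (k : ℕ) (ℓ : ℝ) (m : ℕ∞) :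
    ∃ A : Planner N, SoundPlanner D A ∧ SatisfiesAnonymity D A k ℓ m :=  by
  classical
  refine ⟨thePlanner N, ?_, ?_⟩
  · intro s g t π h
    unfold thePlanner at h
    split_ifs at h with hf
    · obtain rfl : bigP D s g = π := Option.some_inj.mp h
      obtain ⟨h1, h2, h3, h4⟩ := bigP_good D (exists_good D hund hf)
      exact ⟨h1, h2, h3, h4 t hf⟩
  · intro s g t htuple
    obtain ⟨_, _, _, A0, hsound, π, S, hA0, hS, hcard, hdist, hagree⟩ := htuple
    have hfeas : ∀ t' ∈ S, ∃ π', Feasible D s g t' π' := by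
      intro t' ht'
      obtain ⟨π', hπ', _⟩ := hagree t' ht'
      exact ⟨π', hsound s g t' π' hπ'⟩
    have hft : ∃ π', Feasible D s g t π' := ⟨π, hsound s g t π hA0⟩
    refine ⟨bigP D s g, S, ?_, hS, hcard, hdist, ?_⟩
    · unfold thePlanner
      rw [if_pos hft]
    · intro t' ht'
      refine ⟨bigP D s g, ?_, rfl⟩
      unfold thePlanner
      rw [if_pos (hfeas t' ht')]
end

section
/- Admissibility of the Tunnel Heuristic: For the Watchman Route Problem with Targets, the heuristic h_tunnel, defined on a search state (n, U) by h_tunnel(n, U) = max_{u ∈ U} min_{q ∈ v⁻¹(u)} d(n, q) + min_{u ∈ U} min_{q ∈ v⁻¹(u)} d(q, g) when U is nonempty, and h_tunnel(n, ∅) = d(n, g), is a lower bound on the cost of any path from n to g that covers all nodes of U. -/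
open scoped ENNReal

variable {N : Type*}

/-- `v⁻¹(u)`: the set of nodes from which `u` is visible. -/
def vinv (D : Domain N) (u : N) : Set N := {q | u ∈ D.v q}

open Classical in
/-- The Tunnel Heuristic for the WRPT. -/
noncomputable def htunnel (D : Domain N) (g n : N) (U : Set N) : ℝ≥0∞ :=
  if U = ∅ then spDist D n g
  else (⨆ u ∈ U, ⨅ q ∈ vinv D u, spDist D n q) +
       (⨅ u ∈ U, ⨅ q ∈ vinv D u, spDist D q g)

lemma cost_nonneg (D : Domain N) : ∀ l, 0 ≤ cost D l
  | [] => le_refl 0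
  | [_] => le_refl 0
  | a :: b :: l => add_nonneg (D.c_nonneg a b) (cost_nonneg D (b :: l))

lemma cost_split (D : Domain N) (x : N) (l2 : List N) :
    ∀ l1 : List N, cost D (l1 ++ x :: l2) = cost D (l1 ++ [x]) + cost D (x :: l2)
  | [] => by simp [cost]
  | [a] => by simp [cost]
  | a :: b :: l1 => by
    have ih := cost_split D x l2 (b :: l1)
    simp only [List.cons_append, List.append_eq, cost] at *
    rw [ih]; ring

lemma spDist_le (D : Domain N) (a b : N) (π : List N)
    (h : IsPath D π ∧ startsAt π a ∧ endsAt π b) :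
    spDist D a b ≤ ENNReal.ofReal (cost D π) := by
  exact iInf₂_le π h

lemma split_bound (D : Domain N) (g n : N) (π : List N) (hπ : IsPath D π)
    (hs : startsAt π n) (he : endsAt π g) (x : N) (hx : x ∈ π) :
    spDist D n x + spDist D x g ≤ ENNReal.ofReal (cost D π) := by
  obtain ⟨l1, l2, rfl⟩ := List.append_of_mem hx
  have hcost : cost D (l1 ++ x :: l2) = cost D (l1 ++ [x]) + cost D (x :: l2) :=
    cost_split D x l2 l1
  have hchain := hπ.2
  have hpre : (l1 ++ [x]).Chain' D.E := hchain.prefix ⟨l2, by simp⟩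
  have hsuf : (x :: l2).Chain' D.E := hchain.suffix ⟨l1, rfl⟩
  have h1 : spDist D n x ≤ ENNReal.ofReal (cost D (l1 ++ [x])) := by
    apply spDist_le
    refine ⟨⟨by simp, hpre⟩, ?_, ?_⟩
    · unfold startsAt at hs ⊢
      cases l1 with
      | nil => simpa using hs
      | cons a l1 => simpa using hs
    · unfold endsAt
      simp [List.getLast?_concat]
  have h2 : spDist D x g ≤ ENNReal.ofReal (cost D (x :: l2)) := by
    apply spDist_le
    refine ⟨⟨by simp, hsuf⟩, ?_, ?_⟩
    · unfold startsAt; simp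
    · unfold endsAt at he ⊢
      rw [← he]
      rw [List.getLast?_append]
      rcases e : (x :: l2).getLast? with _ | y
      · simp [List.getLast?_eq_none_iff] at e
      · rfl
  calc spDist D n x + spDist D x g
      ≤ ENNReal.ofReal (cost D (l1 ++ [x])) + ENNReal.ofReal (cost D (x :: l2)) :=
        add_le_add h1 h2
    _ = ENNReal.ofReal (cost D (l1 ++ x :: l2)) := by
        rw [hcost, ENNReal.ofReal_add (cost_nonneg D _) (cost_nonneg D _)]

/-- Admissibility of the Tunnel Heuristic: `h_tunnel(n, U)` is a lower
bound on the cost of any path from `n` to `g` covering every node of `U`. -/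
theorem stmt7 (D : Domain N) (g n : N) (U : Set N) :
    ∀ π : List N, IsPath D π → startsAt π n → endsAt π g →
      (∀ u ∈ U, Covers D π u) →
      htunnel D g n U ≤ ENNReal.ofReal (cost D π) := by
  intro π hπ hs he hcov
  by_cases hU : U = ∅
  · rw [htunnel, if_pos hU]
    exact spDist_le D n g π ⟨hπ, hs, he⟩
  · rw [htunnel, if_neg hU]
    have hne : U.Nonempty := Set.nonempty_iff_ne_empty.mpr hU
    haveI : Nonempty ↥U := hne.to_subtype
    have key : ∀ u : ↥U,
        (⨅ q ∈ vinv D (u : N), spDist D n q) +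
        (⨅ u' ∈ U, ⨅ q ∈ vinv D u', spDist D q g) ≤ ENNReal.ofReal (cost D π) := by
      rintro ⟨u, hu⟩
      obtain ⟨q, hqπ, hqv⟩ := hcov u hu
      have hq : q ∈ vinv D u := hqv
      have h1 : (⨅ q' ∈ vinv D u, spDist D n q') ≤ spDist D n q := biInf_le _ hq
      have h2 : (⨅ u' ∈ U, ⨅ q' ∈ vinv D u', spDist D q' g) ≤ spDist D q g := by
        calc (⨅ u' ∈ U, ⨅ q' ∈ vinv D u', spDist D q' g)
            ≤ ⨅ q' ∈ vinv D u, spDist D q' g := biInf_le _ hu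
          _ ≤ spDist D q g := biInf_le _ hq
      calc _ ≤ spDist D n q + spDist D q g := add_le_add h1 h2
        _ ≤ ENNReal.ofReal (cost D π) := split_bound D g n π hπ hs he q hqπ
    have hrw : (⨆ u ∈ U, ⨅ q ∈ vinv D u, spDist D n q)
        = ⨆ u : ↥U, ⨅ q ∈ vinv D (u : N), spDist D n q := by
      rw [iSup_subtype]
    rw [hrw, ENNReal.iSup_add]
    exact iSup_le key
end
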